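/- For every integer n ≥ 3, the complete graph K_n admits no equitable neighbour-sum-distinguishing edge 2-colouring; equivalently, the equitable nsd-index of K_n is at least 3. -/

import Mathlib

open Finset

variable {V : Type*} [Fintype V] [DecidableEq V]

/-- The vertex sum at `v` induced by an edge colouring `γ`:
the sum of the colours of the edges incident with `v`. -/
def vSum (G : SimpleGraph V) [DecidableRel G.Adj] (γ : Sym2 V → ℕ) (v : V) : ℕ :=
  ∑ u ∈ G.neighborFinset v, γ s(v, u)

/-- `γ` is an edge `k`-colouring: every edge gets a colour in `{1, …, k}`. -/
def IsEdgeKColoring (G : SimpleGraph V) (k : ℕ) (γ : Sym2 V → ℕ) : Prop :=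
  ∀ e ∈ G.edgeSet, 1 ≤ γ e ∧ γ e ≤ k

/-- `γ` is a neighbour-sum-distinguishing edge colouring. -/
def NsdEdge (G : SimpleGraph V) [DecidableRel G.Adj] (γ : Sym2 V → ℕ) : Prop :=
  ∀ ⦃u v : V⦄, G.Adj u v → vSum G γ u ≠ vSum G γ v

/-- The number of edges of `G` coloured `i` by `γ`. -/
def edgeClassCard (G : SimpleGraph V) [DecidableRel G.Adj] (γ : Sym2 V → ℕ) (i : ℕ) : ℕ :=
  (G.edgeFinset.filter fun e => γ e = i).card

/-- `γ` is equitable as an edge `k`-colouring: any two colour classes among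
`{1, …, k}` have sizes differing by at most one. -/
def EquitableEdge (G : SimpleGraph V) [DecidableRel G.Adj] (k : ℕ) (γ : Sym2 V → ℕ) : Prop :=
  ∀ i ∈ Finset.Icc 1 k, ∀ j ∈ Finset.Icc 1 k,
    edgeClassCard G γ i ≤ edgeClassCard G γ j + 1

/-- `G` admits an equitable neighbour-sum-distinguishing edge `k`-colouring. -/
def HasEqNsdEdge (G : SimpleGraph V) [DecidableRel G.Adj] (k : ℕ) : Prop :=
  ∃ γ : Sym2 V → ℕ, IsEdgeKColoring G k γ ∧ NsdEdge G γ ∧ EquitableEdge G k γ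

instance {W : Type*} [DecidableEq W] : DecidableRel (SimpleGraph.completeGraph W).Adj := fun a b =>
  inferInstanceAs (Decidable (a ≠ b))

lemma cg_nbr (n : ℕ) (v : Fin n) :
    (SimpleGraph.completeGraph (Fin n)).neighborFinset v = Finset.univ.erase v := by
  ext u
  simp [SimpleGraph.mem_neighborFinset, SimpleGraph.completeGraph, eq_comm, ne_comm]

lemma cg_nbr_card (n : ℕ) (v : Fin n) :
    ((SimpleGraph.completeGraph (Fin n)).neighborFinset v).card = n - 1 := by
  rw [cg_nbr]; simp

/-- For every `n ≥ 3`, the complete graph `K_n` admits no equitable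
neighbour-sum-distinguishing edge `2`-colouring; equivalently, its equitable
nsd-index is at least `3`. -/
theorem completeGraph_no_equitable_nsd_two (n : ℕ) (hn : 3 ≤ n) :
    ¬ HasEqNsdEdge (SimpleGraph.completeGraph (Fin n)) 2 ∧
    ∀ k : ℕ, HasEqNsdEdge (SimpleGraph.completeGraph (Fin n)) k → 3 ≤ k := by
  set G := SimpleGraph.completeGraph (Fin n) with hG
  have hadj : ∀ u v : Fin n, u ≠ v → G.Adj u v := fun u v h => h
  have hedge : ∀ u v : Fin n, u ≠ v → s(u, v) ∈ G.edgeSet := fun u v h => h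
  set a0 : Fin n := ⟨0, by omega⟩ with ha0
  set a1 : Fin n := ⟨1, by omega⟩ with ha1
  have h01 : a0 ≠ a1 := by simp [ha0, ha1, Fin.ext_iff]
  -- k = 2 case
  have key2 : ¬ HasEqNsdEdge G 2 := by
    rintro ⟨γ, hcol, hnsd, -⟩
    -- d v = number of 2-coloured edges at v
    set d : Fin n → ℕ := fun v => ((G.neighborFinset v).filter (fun u => γ s(v, u) = 2)).card
      with hd
    have hdle : ∀ v, d v ≤ n - 1 := by
      intro v
      calc d v ≤ (G.neighborFinset v).card := Finset.card_filter_le _ _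
        _ = n - 1 := cg_nbr_card n v
    have hsum : ∀ v, vSum G γ v = (n - 1) + d v := by
      intro v
      have hsplit := Finset.sum_filter_add_sum_filter_not (G.neighborFinset v)
        (fun u => γ s(v, u) = 2) (fun u => γ s(v, u))
      have h2 : ∑ u ∈ (G.neighborFinset v).filter (fun u => γ s(v, u) = 2),
          γ s(v, u) = 2 * d v := by
        rw [Finset.sum_congr rfl (fun u hu => (Finset.mem_filter.mp hu).2)]
        simp [hd, mul_comm]
      have h1 : ∑ u ∈ (G.neighborFinset v).filter (fun u => ¬ γ s(v, u) = 2),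
          γ s(v, u) = (n - 1) - d v := by
        rw [Finset.sum_congr rfl (fun u hu => ?_), Finset.sum_const, smul_eq_mul, mul_one]
        · rw [Finset.filter_not, Finset.card_sdiff_of_subset (Finset.filter_subset _ _),
            cg_nbr_card, hd]
        · have hu' := Finset.mem_filter.mp hu
          have := hcol s(v, u)
            (hedge v u (G.ne_of_adj ((SimpleGraph.mem_neighborFinset _ _ _).mp hu'.1)))
          omega
      have := hdle v
      unfold vSum
      omega
    -- d is injective, hence (as a map Fin n → Fin n) surjective
    have hinj : Function.Injective (fun v : Fin n => (⟨d v, by have := hdle v; omega⟩ : Fin n)) := by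
      intro u v huv
      by_contra hne
      have := hnsd (hadj u v hne)
      rw [hsum, hsum] at this
      simp only [Fin.mk.injEq] at huv
      omega
    have hsurj := Finite.surjective_of_injective hinj
    obtain ⟨a, ha⟩ := hsurj ⟨0, by omega⟩
    obtain ⟨b, hb⟩ := hsurj ⟨n - 1, by omega⟩
    simp only [Fin.mk.injEq] at ha hb
    have hab : a ≠ b := by intro h; rw [h, hb] at ha; omega
    simp only [hd] at ha hb
    -- from d a = 0 : γ s(a,b) ≠ 2
    have hbmem : b ∈ G.neighborFinset a :=
      (SimpleGraph.mem_neighborFinset _ _ _).mpr (hadj a b hab)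
    have hne2 : γ s(a, b) ≠ 2 := by
      intro h2
      have hmem : b ∈ (G.neighborFinset a).filter (fun u => γ s(a, u) = 2) :=
        Finset.mem_filter.mpr ⟨hbmem, h2⟩
      have := Finset.card_pos.mpr ⟨b, hmem⟩
      omega
    -- from d b = n - 1 : all edges at b, in particular s(b,a), are coloured 2
    have hamem : a ∈ G.neighborFinset b :=
      (SimpleGraph.mem_neighborFinset _ _ _).mpr (hadj b a hab.symm)
    have hfull : (G.neighborFinset b).filter (fun u => γ s(b, u) = 2) = G.neighborFinset b := by
      apply Finset.eq_of_subset_of_card_le (Finset.filter_subset _ _)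
      rw [cg_nbr_card, hb]
    have h2ba : γ s(b, a) = 2 := by
      have := hfull ▸ hamem
      exact (Finset.mem_filter.mp this).2
    rw [Sym2.eq_swap] at h2ba
    exact hne2 h2ba
  refine ⟨key2, fun k hk => ?_⟩
  by_contra hklt
  push_neg at hklt
  interval_cases k
  · obtain ⟨γ, hcol, -, -⟩ := hk
    have := hcol s(a0, a1) (hedge a0 a1 h01)
    omega
  · obtain ⟨γ, hcol, hnsd, -⟩ := hk
    have hone : ∀ v : Fin n, vSum G γ v = n - 1 := by
      intro v
      unfold vSum
      rw [Finset.sum_congr rfl (fun u hu => ?_), Finset.sum_const, smul_eq_mul, mul_one,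
        cg_nbr_card]
      have := hcol s(v, u)
        (hedge v u (G.ne_of_adj ((SimpleGraph.mem_neighborFinset _ _ _).mp hu)))
      omega
    exact hnsd (hadj a0 a1 h01) (by rw [hone, hone])
  · exact key2 hk
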